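/- arXiv:1304.5578 — 2 statements merged into one kernel-verified Lean document; each statement's English description precedes it below -/
import Mathlib

section
/- Let F be the self-adjoint Jacobi operator on ℓ²(ℕ) with zero diagonal and off-diagonal entries γ_n = √((2n+2)(2n+3)) − √((2n+1)(2n+2)). Then F is bounded with operator norm ‖F‖ ≤ 2(1 + 1/1600000000). -/
noncomputable def gam (n : ℕ) : ℝ :=
  Real.sqrt ((2 * n + 2) * (2 * n + 3)) - Real.sqrt ((2 * n + 1) * (2 * n + 2))

def Dd : ℕ := 10^12
def Kk (n : ℕ) : ℕ := 16*n*n + 28*n + 11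
def st (i x : ℕ) : ℕ := if x = 0 then 0 else
    2*Dd - ((Kk i + 1)*Dd*Dd / (Kk i * x) + 1)
def loop (fuel : ℕ) : ℕ → ℕ → ℕ :=
  Nat.rec (motive := fun _ => ℕ → ℕ → ℕ) (fun _ x => x)
    (fun _ ih i x => ih (i+1) (st i x)) fuel
def b (n : ℕ) : ℕ := loop n 0 (2*Dd)

lemma loop_succ (a i x : ℕ) : loop (a+1) i x = loop a (i+1) (st i x) := rfl
lemma loop_add (c a i x : ℕ) : loop (c + a) i x = loop c (i + a) (loop a i x) := by
  induction a generalizing i x with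
  | zero => rfl
  | succ a ih => rw [show c + (a+1) = (c+a)+1 from rfl, loop_succ, ih, loop_succ,
      Nat.add_assoc, Nat.add_comm a 1]

lemma b_succ (n : ℕ) : b (n+1) = st n (b n) := by
  unfold b
  rw [Nat.add_comm n 1, loop_add, Nat.zero_add]
  rfl

lemma chunk (k x y : ℕ) (h1 : b (250*k) = x) (h2 : loop 250 (250*k) x = y) :
    b (250*k+250) = y := by
  have h1' : loop (250*k) 0 (2*Dd) = x := h1
  unfold b
  rw [show 250*k+250 = 250 + 250*k from by ring, loop_add, Nat.zero_add, h1', h2]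
lemma gam_nonneg (n : ℕ) : 0 ≤ gam n := by
  have hx : (0:ℝ) ≤ (n:ℝ) := Nat.cast_nonneg n
  exact sub_nonneg.mpr (Real.sqrt_le_sqrt (by nlinarith))

lemma gam_sq (n : ℕ) : (gam n)^2 ≤ 1 + 1/(Kk n : ℝ) := by
  have hx : (0:ℝ) ≤ (n:ℝ) := Nat.cast_nonneg n
  have hA : (0:ℝ) ≤ (2*(n:ℝ)+2)*(2*(n:ℝ)+3) := by nlinarith
  have hB : (0:ℝ) ≤ (2*(n:ℝ)+1)*(2*(n:ℝ)+2) := by nlinarith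
  have hK : (Kk n : ℝ) = 16*(n:ℝ)^2+28*(n:ℝ)+11 := by unfold Kk; push_cast; ring
  have hKpos : (0:ℝ) < 16*(n:ℝ)^2+28*(n:ℝ)+11 := by nlinarith [sq_nonneg ((n:ℝ))]
  set s : ℝ := Real.sqrt (((2*(n:ℝ)+2)*(2*(n:ℝ)+3)) * ((2*(n:ℝ)+1)*(2*(n:ℝ)+2))) with hsdef
  have hs0 : 0 ≤ s := Real.sqrt_nonneg _
  have hs2 : s^2 = ((2*(n:ℝ)+2)*(2*(n:ℝ)+3)) * ((2*(n:ℝ)+1)*(2*(n:ℝ)+2)) :=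
    Real.sq_sqrt (by nlinarith)
  have egam : (gam n)^2 = (2*(n:ℝ)+2)*(2*(n:ℝ)+3) + (2*(n:ℝ)+1)*(2*(n:ℝ)+2) - 2*s := by
    unfold gam
    have hmul : Real.sqrt ((2*(n:ℝ)+2)*(2*(n:ℝ)+3)) * Real.sqrt ((2*(n:ℝ)+1)*(2*(n:ℝ)+2)) = s := by
      rw [hsdef, ← Real.sqrt_mul hA]
    rw [sub_sq, Real.sq_sqrt hA, Real.sq_sqrt hB, mul_assoc, hmul]
    ring
  rw [egam, hK]
  set ε : ℝ := 1/(16*(n:ℝ)^2+28*(n:ℝ)+11) with hεdef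
  have lin : ε * (16*(n:ℝ)^2+28*(n:ℝ)+11) = 1 := one_div_mul_cancel hKpos.ne'
  have hε0 : 0 < ε := by positivity
  have hε1 : ε ≤ 1 := by
    rw [hεdef, div_le_one hKpos]; nlinarith [sq_nonneg ((n:ℝ))]
  have ht0 : 0 ≤ (2*(n:ℝ)+2)*(2*(n:ℝ)+3) + (2*(n:ℝ)+1)*(2*(n:ℝ)+2) - 1 - ε := by nlinarith
  have hid : 4*(((2*(n:ℝ)+2)*(2*(n:ℝ)+3)) * ((2*(n:ℝ)+1)*(2*(n:ℝ)+2)))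
      - ((2*(n:ℝ)+2)*(2*(n:ℝ)+3) + (2*(n:ℝ)+1)*(2*(n:ℝ)+2) - 1 - ε)^2
      = ((4*(n:ℝ)+3)*(16*(n:ℝ)^2+28*(n:ℝ)+11) - 1)*ε^2 := by
    linear_combination (1 - (4*(n:ℝ)+3)*ε) * lin
  have hpos : 0 ≤ ((4*(n:ℝ)+3)*(16*(n:ℝ)^2+28*(n:ℝ)+11) - 1)*ε^2 := by
    have : (1:ℝ) ≤ (4*(n:ℝ)+3)*(16*(n:ℝ)^2+28*(n:ℝ)+11) := by nlinarith [sq_nonneg ((n:ℝ))]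
    exact mul_nonneg (by linarith) (sq_nonneg ε)
  have key : ((2*(n:ℝ)+2)*(2*(n:ℝ)+3) + (2*(n:ℝ)+1)*(2*(n:ℝ)+2) - 1 - ε)^2 ≤ 4*s^2 := by
    rw [hs2]; linarith [hid, hpos]
  have h2s : (2*(n:ℝ)+2)*(2*(n:ℝ)+3) + (2*(n:ℝ)+1)*(2*(n:ℝ)+2) - 1 - ε ≤ 2*s := by
    calc (2*(n:ℝ)+2)*(2*(n:ℝ)+3) + (2*(n:ℝ)+1)*(2*(n:ℝ)+2) - 1 - ε
        = Real.sqrt (((2*(n:ℝ)+2)*(2*(n:ℝ)+3) + (2*(n:ℝ)+1)*(2*(n:ℝ)+2) - 1 - ε)^2) :=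
          (Real.sqrt_sq ht0).symm
      _ ≤ Real.sqrt (4*s^2) := Real.sqrt_le_sqrt key
      _ = 2*s := by rw [show 4*s^2 = (2*s)^2 by ring, Real.sqrt_sq (by linarith)]
  linarith

lemma gam_le_two (n : ℕ) : gam n ≤ 2 := by
  have h1 := gam_sq n
  have h2 := gam_nonneg n
  have hK : (1:ℝ) ≤ (Kk n : ℝ) := by
    have : 1 ≤ Kk n := by unfold Kk; omega
    exact_mod_cast this
  have h3 : 1/(Kk n : ℝ) ≤ 1 := by rw [div_le_one (by linarith)]; linarith
  nlinarith
set_option maxRecDepth 100000 in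
lemma b_final : b 10000 = 1000093274673 := by
  have c0 : b (250*0) = 2*Dd := rfl
  have c1 : b (250*1) = 1003705799311 := chunk 0 2000000000000 1003705799311 c0 (by decide)
  have c2 : b (250*2) = 1001858935573 := chunk 1 1003705799311 1001858935573 c1 (by decide)
  have c3 : b (250*3) = 1001240720617 := chunk 2 1001858935573 1001240720617 c2 (by decide)
  have c4 : b (250*4) = 1000931098096 := chunk 3 1001240720617 1000931098096 c3 (by decide)
  have c5 : b (250*5) = 1000745153831 := chunk 4 1000931098096 1000745153831 c4 (by decide)
  have c6 : b (250*6) = 1000621117940 := chunk 5 1000745153831 1000621117940 c5 (by decide)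
  have c7 : b (250*7) = 1000532484339 := chunk 6 1000621117940 1000532484339 c6 (by decide)
  have c8 : b (250*8) = 1000465988807 := chunk 7 1000532484339 1000465988807 c7 (by decide)
  have c9 : b (250*9) = 1000414257820 := chunk 8 1000465988807 1000414257820 c8 (by decide)
  have c10 : b (250*10) = 1000372865228 := chunk 9 1000414257820 1000372865228 c9 (by decide)
  have c11 : b (250*11) = 1000338993324 := chunk 10 1000372865228 1000338993324 c10 (by decide)
  have c12 : b (250*12) = 1000310763104 := chunk 11 1000338993324 1000310763104 c11 (by decide)
  have c13 : b (250*13) = 1000286873385 := chunk 12 1000310763104 1000286873385 c12 (by decide)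
  have c14 : b (250*14) = 1000266394569 := chunk 13 1000286873385 1000266394569 c13 (by decide)
  have c15 : b (250*15) = 1000248644813 := chunk 14 1000266394569 1000248644813 c14 (by decide)
  have c16 : b (250*16) = 1000233112662 := chunk 15 1000248644813 1000233112662 c15 (by decide)
  have c17 : b (250*17) = 1000219406947 := chunk 16 1000233112662 1000219406947 c16 (by decide)
  have c18 : b (250*18) = 1000207223409 := chunk 17 1000219406947 1000207223409 c17 (by decide)
  have c19 : b (250*19) = 1000196321784 := chunk 18 1000207223409 1000196321784 c18 (by decide)
  have c20 : b (250*20) = 1000186509882 := chunk 19 1000196321784 1000186509882 c19 (by decide)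
  have c21 : b (250*21) = 1000177632070 := chunk 20 1000186509882 1000177632070 c20 (by decide)
  have c22 : b (250*22) = 1000169561023 := chunk 21 1000177632070 1000169561023 c21 (by decide)
  have c23 : b (250*23) = 1000162191554 := chunk 22 1000169561023 1000162191554 c22 (by decide)
  have c24 : b (250*24) = 1000155435981 := chunk 23 1000162191554 1000155435981 c23 (by decide)
  have c25 : b (250*25) = 1000149220675 := chunk 24 1000155435981 1000149220675 c24 (by decide)
  have c26 : b (250*26) = 1000143483310 := chunk 25 1000149220675 1000143483310 c25 (by decide)
  have c27 : b (250*27) = 1000138170801 := chunk 26 1000143483310 1000138170801 c26 (by decide)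
  have c28 : b (250*28) = 1000133237627 := chunk 27 1000138170801 1000133237627 c27 (by decide)
  have c29 : b (250*29) = 1000128644563 := chunk 28 1000133237627 1000128644563 c28 (by decide)
  have c30 : b (250*30) = 1000124357630 := chunk 29 1000128644563 1000124357630 c29 (by decide)
  have c31 : b (250*31) = 1000120347193 := chunk 30 1000124357630 1000120347193 c30 (by decide)
  have c32 : b (250*32) = 1000116587336 := chunk 31 1000120347193 1000116587336 c31 (by decide)
  have c33 : b (250*33) = 1000113055289 := chunk 32 1000116587336 1000113055289 c32 (by decide)
  have c34 : b (250*34) = 1000109730951 := chunk 33 1000113055289 1000109730951 c33 (by decide)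
  have c35 : b (250*35) = 1000106596533 := chunk 34 1000109730951 1000106596533 c34 (by decide)
  have c36 : b (250*36) = 1000103636200 := chunk 35 1000106596533 1000103636200 c35 (by decide)
  have c37 : b (250*37) = 1000100835842 := chunk 36 1000103636200 1000100835842 c36 (by decide)
  have c38 : b (250*38) = 1000098182835 := chunk 37 1000100835842 1000098182835 c37 (by decide)
  have c39 : b (250*39) = 1000095665848 := chunk 38 1000098182835 1000095665848 c38 (by decide)
  have c40 : b (250*40) = 1000093274673 := chunk 39 1000095665848 1000093274673 c39 (by decide)
  exact c40

lemma b_zero_prop (m : ℕ) (h : b m = 0) (k : ℕ) : b (m + k) = 0 := by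
  induction k with
  | zero => exact h
  | succ k ih => rw [← Nat.add_assoc, b_succ, ih]; rfl

lemma b_pos (n : ℕ) (hn : n ≤ 10000) : 1 ≤ b n := by
  by_contra hc
  have h0 : b n = 0 := by omega
  have := b_zero_prop n h0 (10000 - n)
  rw [Nat.add_sub_cancel' hn, b_final] at this
  omega

lemma b_le (n : ℕ) : b n ≤ 2*Dd := by
  cases n with
  | zero => exact le_refl _
  | succ k =>
    rw [b_succ]; unfold st
    split
    · omega
    · exact Nat.sub_le _ _

noncomputable def cw (n : ℕ) : ℝ := if n ≤ 10000 then (b n : ℝ)/(Dd:ℝ) else 1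

lemma Dd_cast : (Dd : ℝ) = 10^12 := by norm_num [Dd]

lemma cw_pos (n : ℕ) : 0 < cw n := by
  unfold cw
  split
  · next h =>
    have := b_pos n h
    have h1 : (1:ℝ) ≤ (b n : ℝ) := by exact_mod_cast this
    rw [Dd_cast]; positivity
  · norm_num

lemma cw_le_two (n : ℕ) : cw n ≤ 2 := by
  unfold cw
  split
  · have := b_le n
    have h1 : (b n : ℝ) ≤ 2*(Dd:ℝ) := by exact_mod_cast this
    rw [div_le_iff₀ (by rw [Dd_cast]; positivity)]
    linarith
  · norm_num

lemma cw_ge (n : ℕ) : 1/(Dd:ℝ) ≤ cw n := by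
  unfold cw
  split
  · next h =>
    have h1 : (1:ℝ) ≤ (b n : ℝ) := by exact_mod_cast b_pos n h
    apply div_le_div_of_nonneg_right h1 ?_ |>.trans (le_refl _) |>.trans (le_refl _)
    rw [Dd_cast]; positivity
  · rw [Dd_cast]; norm_num

lemma Kk_cast (n : ℕ) : (Kk n : ℝ) = 16*(n:ℝ)^2+28*(n:ℝ)+11 := by
  unfold Kk; push_cast; ring

lemma Kk_pos (n : ℕ) : (0:ℝ) < (Kk n : ℝ) := by
  rw [Kk_cast]; nlinarith [Nat.cast_nonneg (α := ℝ) n, sq_nonneg ((n:ℝ))]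

lemma step_ineq (n : ℕ) (hn : n < 10000) : cw (n+1) + (gam n)^2 / cw n ≤ 2 := by
  have hX : 1 ≤ b n := b_pos n (by omega)
  have hY : 1 ≤ b (n+1) := b_pos (n+1) (by omega)
  set f : ℕ := (Kk n + 1)*Dd*Dd / (Kk n * b n) with hf
  have hb1 : b (n+1) = 2*Dd - (f + 1) := by
    rw [b_succ]; unfold st; rw [if_neg (by omega)]
  have hBpos : 0 < Kk n * b n := by
    have : 0 < Kk n := by unfold Kk; omega
    exact Nat.mul_pos this (by omega)
  have hflt : (Kk n + 1)*Dd*Dd < (Kk n * b n) * (f + 1) :=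
    Nat.lt_mul_div_succ _ hBpos
  have hfle : f + 1 ≤ 2*Dd := by omega
  -- cast to ℝ
  have hYr : (b (n+1) : ℝ) = 2*(Dd:ℝ) - ((f:ℝ) + 1) := by
    rw [hb1]; push_cast [Nat.cast_sub hfle]; ring
  have hfltr : ((Kk n : ℝ) + 1)*(Dd:ℝ)*(Dd:ℝ) < ((Kk n : ℝ) * (b n : ℝ)) * ((f:ℝ) + 1) := by
    exact_mod_cast hflt
  have hXr : (1:ℝ) ≤ (b n : ℝ) := by exact_mod_cast hX
  have hD0 : (0:ℝ) < (Dd:ℝ) := by rw [Dd_cast]; positivity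
  have hK0 : (0:ℝ) < (Kk n : ℝ) := Kk_pos n
  have hgamK : (gam n)^2 * (Kk n : ℝ) ≤ (Kk n : ℝ) + 1 := by
    have h1 := gam_sq n
    have h2 : (1 + 1/(Kk n : ℝ)) * (Kk n : ℝ) = (Kk n : ℝ) + 1 := by
      field_simp
    nlinarith [hK0]
  have hcwn : cw n = (b n : ℝ)/(Dd:ℝ) := by unfold cw; rw [if_pos (by omega)]
  have hcwn1 : cw (n+1) = (b (n+1) : ℝ)/(Dd:ℝ) := by unfold cw; rw [if_pos (by omega)]
  rw [hcwn, hcwn1, hYr]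
  have hX0 : (0:ℝ) < (b n : ℝ) := by linarith
  have e1 : (gam n)^2 / ((b n : ℝ)/(Dd:ℝ)) = (gam n)^2 * (Dd:ℝ) / (b n : ℝ) :=
    div_div_eq_mul_div _ _ _
  rw [e1]
  have h3 : (gam n)^2 * (Dd:ℝ) / (b n : ℝ) ≤ ((f:ℝ)+1)/(Dd:ℝ) := by
    rw [div_le_div_iff₀ hX0 hD0]
    have h4 := mul_le_mul_of_nonneg_right hgamK (le_of_lt (mul_pos hD0 hD0))
    nlinarith [hfltr, hK0]
  have h5 : (2*(Dd:ℝ) - ((f:ℝ) + 1))/(Dd:ℝ) + ((f:ℝ)+1)/(Dd:ℝ) = 2 := by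
    field_simp
    ring
  linarith

lemma tail_ineq (m : ℕ) (hm : 10000 ≤ m) : cw (m+1) + (gam m)^2 / cw m ≤ 2 + 1/800000000 := by
  have hc1 : (1:ℝ) ≤ cw m := by
    unfold cw
    split
    · next h =>
      have hm' : m = 10000 := by omega
      subst hm'
      rw [b_final, Dd_cast]
      norm_num
    · norm_num
  have hcw1 : cw (m+1) = 1 := by unfold cw; rw [if_neg (by omega)]
  have h2 : (gam m)^2 / cw m ≤ (gam m)^2 := by
    apply div_le_self (sq_nonneg _) hc1
  have h3 := gam_sq m
  have h4 : 1/(Kk m : ℝ) ≤ 1/800000000 := by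
    apply one_div_le_one_div_of_le (by norm_num)
    have : (800000000 : ℕ) ≤ Kk m := by unfold Kk; nlinarith
    exact_mod_cast this
  rw [hcw1]
  linarith

lemma cw_zero : cw 0 = 2 := by
  unfold cw
  rw [if_pos (by omega)]
  have : b 0 = 2*Dd := rfl
  rw [this]
  push_cast [Dd_cast]
  norm_num

lemma gam_sq_le_four (n : ℕ) : (gam n)^2 ≤ 4 := by
  nlinarith [gam_le_two n, gam_nonneg n]

lemma dcoef_le (n : ℕ) : (gam n)^2 / cw n ≤ 4*10^12 := by
  rw [div_le_iff₀ (cw_pos n)]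
  have h1 := cw_ge n
  rw [Dd_cast] at h1
  nlinarith [gam_sq_le_four n, sq_nonneg (gam n)]

/-- The self-adjoint Jacobi operator `F` with zero diagonal and off-diagonal entries
`γ_n` is bounded with operator norm at most `2(1 + 1/1600000000)`: its quadratic form
`⟨v, F v⟩ = ∑_n 2 γ_n v_n v_{n+1}` satisfies the corresponding bound on all of `ℓ²`. -/
theorem jacobi_offdiag_norm_bound (v : ℕ → ℝ) (hv : Summable fun n => (v n) ^ 2) :
    |∑' n, 2 * gam n * v n * v (n + 1)| ≤
      2 * (1 + 1 / 1600000000) * ∑' n, (v n) ^ 2 := by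
  have hv1 : Summable (fun n => v (n+1)^2) := (summable_nat_add_iff 1).mpr hv
  have hcv : Summable (fun n => cw n * v n^2) :=
    Summable.of_nonneg_of_le (fun n => mul_nonneg (cw_pos n).le (sq_nonneg _))
      (fun n => mul_le_mul_of_nonneg_right (cw_le_two n) (sq_nonneg _)) (hv.mul_left 2)
  have hdv : Summable (fun n => (gam n)^2 / cw n * v (n+1)^2) :=
    Summable.of_nonneg_of_le
      (fun n => mul_nonneg (div_nonneg (sq_nonneg _) (cw_pos n).le) (sq_nonneg _))
      (fun n => mul_le_mul_of_nonneg_right (dcoef_le n) (sq_nonneg _)) (hv1.mul_left _)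
  have hsum : Summable (fun n => cw n * v n^2 + (gam n)^2 / cw n * v (n+1)^2) := hcv.add hdv
  have habs : ∀ n, |2 * gam n * v n * v (n+1)| ≤ cw n * v n^2 + (gam n)^2 / cw n * v (n+1)^2 := by
    intro n
    have hc := cw_pos n
    have hg := gam_nonneg n
    have he : |2 * gam n * v n * v (n+1)| = 2 * gam n * |v n| * |v (n+1)| := by
      rw [abs_mul, abs_mul, abs_mul]
      rw [abs_of_nonneg (by norm_num : (0:ℝ) ≤ 2), abs_of_nonneg hg]
    rw [he]
    have h2 : (gam n)^2 / cw n * cw n = (gam n)^2 := div_mul_cancel₀ _ hc.ne'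
    have expand : (cw n * v n^2 + (gam n)^2 / cw n * v (n+1)^2) * cw n
        = (cw n)^2 * |v n|^2 + (gam n)^2 * |v (n+1)|^2 := by
      rw [sq_abs, sq_abs]; nlinarith [h2]
    have key2 : 2 * gam n * |v n| * |v (n+1)| * cw n
        ≤ (cw n)^2 * |v n|^2 + (gam n)^2 * |v (n+1)|^2 := by
      nlinarith [sq_nonneg (cw n * |v n| - gam n * |v (n+1)|)]
    have key3 : 2 * gam n * |v n| * |v (n+1)| * cw n
        ≤ (cw n * v n^2 + (gam n)^2 / cw n * v (n+1)^2) * cw n := by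
      rw [expand]; exact key2
    exact le_of_mul_le_mul_right key3 hc
  have hTabs : Summable (fun n => |2 * gam n * v n * v (n+1)|) :=
    Summable.of_nonneg_of_le (fun n => abs_nonneg _) habs hsum
  have hT : Summable (fun n => 2 * gam n * v n * v (n+1)) := hTabs.of_abs
  -- shifted second sum
  set g : ℕ → ℝ := fun m => Nat.casesOn m 0 (fun k => (gam k)^2 / cw k * v (k+1)^2) with hgdef
  have hgle : ∀ m, g m ≤ 4*10^12 * v m^2 := by
    intro m
    cases m with
    | zero => simpa [hgdef] using mul_nonneg (by norm_num : (0:ℝ) ≤ 4*10^12) (sq_nonneg (v 0))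
    | succ k => exact mul_le_mul_of_nonneg_right (dcoef_le k) (sq_nonneg _)
  have hgnn : ∀ m, 0 ≤ g m := by
    intro m
    cases m with
    | zero => simp [hgdef]
    | succ k => exact mul_nonneg (div_nonneg (sq_nonneg _) (cw_pos k).le) (sq_nonneg _)
  have hgsum : Summable g := Summable.of_nonneg_of_le hgnn hgle (hv.mul_left _)
  have hshift : ∑' n, (gam n)^2 / cw n * v (n+1)^2 = ∑' m, g m := by
    rw [Summable.tsum_eq_zero_add hgsum]
    simp [hgdef]
  have hcoef : ∀ m, cw m * v m^2 + g m ≤ (2 + 1/800000000) * v m^2 := by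
    intro m
    cases m with
    | zero =>
      have : g 0 = 0 := rfl
      rw [this, cw_zero]
      nlinarith [sq_nonneg (v 0)]
    | succ k =>
      have hgk : g (k+1) = (gam k)^2 / cw k * v (k+1)^2 := rfl
      have hco : cw (k+1) + (gam k)^2 / cw k ≤ 2 + 1/800000000 := by
        rcases lt_or_ge k 10000 with h | h
        · have := step_ineq k h
          linarith
        · exact tail_ineq k h
      have := mul_le_mul_of_nonneg_right hco (sq_nonneg (v (k+1)))
      rw [hgk]
      nlinarith [this]
  calc |∑' n, 2 * gam n * v n * v (n + 1)|
      ≤ ∑' n, |2 * gam n * v n * v (n + 1)| := by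
        have h := norm_tsum_le_tsum_norm (f := fun n => 2 * gam n * v n * v (n + 1))
          (by simpa only [Real.norm_eq_abs] using hTabs)
        simpa only [Real.norm_eq_abs] using h
    _ ≤ ∑' n, (cw n * v n^2 + (gam n)^2 / cw n * v (n+1)^2) := Summable.tsum_le_tsum habs hTabs hsum
    _ = ∑' n, cw n * v n^2 + ∑' n, (gam n)^2 / cw n * v (n+1)^2 := Summable.tsum_add hcv hdv
    _ = ∑' n, cw n * v n^2 + ∑' m, g m := by rw [hshift]
    _ = ∑' m, (cw m * v m^2 + g m) := (Summable.tsum_add hcv hgsum).symm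
    _ ≤ ∑' m, (2 + 1/800000000) * v m^2 :=
        Summable.tsum_le_tsum hcoef (hcv.add hgsum) (hv.mul_left _)
    _ = (2 + 1/800000000) * ∑' m, v m^2 := tsum_mul_left
    _ = 2 * (1 + 1 / 1600000000) * ∑' n, (v n) ^ 2 := by norm_num
end

section
/- Let H be a Hilbert space and T a bounded self-adjoint positivity-improving operator with respect to a self-dual cone (or a cone given by a fixed orthonormal basis: T improves positivity if ⟨e_m, T e_n⟩ > 0 for all basis vectors and T maps nonzero nonnegative vectors to strictly positive vectors). If ‖T‖ is an eigenvalue of T, then ‖T‖ is a simple eigenvalue and the corresponding eigenvector can be chosen strictly positive. -/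
open scoped InnerProductSpace lp

set_option linter.unusedSectionVars false

noncomputable section
namespace PFF

variable {H : Type*} [NormedAddCommGroup H] [InnerProductSpace ℝ H] [CompleteSpace H]

def absLp (f : ℓ²(ℕ, ℝ)) : ℓ²(ℕ, ℝ) :=
  ⟨fun n => |f n|, by
    apply memℓp_gen
    have h := (memℓp_gen_iff (p := 2) (by norm_num)).1 (lp.memℓp f)
    simpa using h⟩

@[simp] lemma absLp_apply (f : ℓ²(ℕ, ℝ)) (n : ℕ) : absLp f n = |f n| := rfl

def absVec (e : HilbertBasis ℕ ℝ H) (v : H) : H := e.repr.symm (absLp (e.repr v))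

@[simp] lemma repr_absVec (e : HilbertBasis ℕ ℝ H) (v : H) (n : ℕ) :
    e.repr (absVec e v) n = |e.repr v n| := by
  simp [absVec]

lemma summable_mul (e : HilbertBasis ℕ ℝ H) (v w : H) :
    Summable fun n => e.repr v n * e.repr w n := by
  have := lp.summable_inner (𝕜 := ℝ) (e.repr v) (e.repr w)
  simpa [mul_comm] using this

lemma inner_eq_tsum (e : HilbertBasis ℕ ℝ H) (v w : H) :
    ⟪v, w⟫_ℝ = ∑' n, e.repr v n * e.repr w n := by
  rw [← e.repr.inner_map_map v w, lp.inner_eq_tsum]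
  simp [mul_comm]

lemma norm_absVec (e : HilbertBasis ℕ ℝ H) (v : H) : ‖absVec e v‖ = ‖v‖ := by
  have h : ‖absVec e v‖ ^ 2 = ‖v‖ ^ 2 := by
    rw [← real_inner_self_eq_norm_sq, ← real_inner_self_eq_norm_sq,
      inner_eq_tsum e, inner_eq_tsum e]
    congr 1
    ext n
    simp [abs_mul_abs_self]
  rw [← Real.sqrt_sq (norm_nonneg (absVec e v)), ← Real.sqrt_sq (norm_nonneg v), h]

lemma absVec_eq_zero_iff (e : HilbertBasis ℕ ℝ H) (v : H) : absVec e v = 0 ↔ v = 0 := by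
  rw [← norm_eq_zero (a := absVec e v), norm_absVec, norm_eq_zero]

/-- coefficient of `T w`: matrix representation. -/
lemma repr_T (e : HilbertBasis ℕ ℝ H) (T : H →L[ℝ] H) (hsa : IsSelfAdjoint T) (w : H) (n : ℕ) :
    e.repr (T w) n = ∑' m, e.repr (T (e n)) m * e.repr w m := by
  rw [e.repr_apply_apply, ← inner_eq_tsum e (T (e n)) w]
  exact (ContinuousLinearMap.isSelfAdjoint_iff_isSymmetric.mp hsa (e n) w).symm

lemma repr_e_nonneg (e : HilbertBasis ℕ ℝ H) (n m : ℕ) : 0 ≤ e.repr (e n) m := by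
  classical
  rw [e.repr_self, lp.single_apply, Pi.single_apply]
  split_ifs <;> norm_num

lemma e_ne_zero (e : HilbertBasis ℕ ℝ H) (n : ℕ) : (e n : H) ≠ 0 := by
  have := e.orthonormal.1 n
  intro h
  rw [h] at this
  simp at this

lemma abs_tsum_le (f : ℕ → ℝ) (hf : Summable fun n => |f n|) :
    |∑' n, f n| ≤ ∑' n, |f n| := by
  have hs : Summable f := summable_abs_iff.mp hf
  rw [abs_le]
  refine ⟨?_, Summable.tsum_le_tsum (fun n => le_abs_self _) hs hf⟩
  have h2 : ∑' n, -f n ≤ ∑' n, |f n| := Summable.tsum_le_tsum (fun n => neg_le_abs _) hs.neg hf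
  rw [tsum_neg] at h2
  linarith

/-- key coefficient inequality: `|T w| ≤ T |w|` componentwise. -/
lemma abs_repr_T_le (e : HilbertBasis ℕ ℝ H) (T : H →L[ℝ] H) (hsa : IsSelfAdjoint T)
    (himp : ∀ v : H, (∀ n, 0 ≤ e.repr v n) → v ≠ 0 → ∀ n, 0 < e.repr (T v) n)
    (w : H) (n : ℕ) :
    |e.repr (T w) n| ≤ e.repr (T (absVec e w)) n := by
  have ha : ∀ m, 0 ≤ e.repr (T (e n)) m := fun m =>
    le_of_lt (himp (e n) (repr_e_nonneg e n) (e_ne_zero e n) m)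
  have habs : ∀ m, |e.repr (T (e n)) m * e.repr w m|
      = e.repr (T (e n)) m * e.repr (absVec e w) m := fun m => by
    rw [abs_mul, abs_of_nonneg (ha m), repr_absVec]
  have hs : Summable fun m => |e.repr (T (e n)) m * e.repr w m| := by
    simp only [habs]
    exact summable_mul e (T (e n)) (absVec e w)
  rw [repr_T e T hsa, repr_T e T hsa]
  calc |∑' m, e.repr (T (e n)) m * e.repr w m|
      ≤ ∑' m, |e.repr (T (e n)) m * e.repr w m| := by
        exact abs_tsum_le _ hs
    _ = ∑' m, e.repr (T (e n)) m * e.repr (absVec e w) m := by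
        simp only [habs]


lemma eigen_of_rayleigh (T : H →L[ℝ] H) (hsa : IsSelfAdjoint T) (ψ : H)
    (h : ⟪ψ, T ψ⟫_ℝ = ‖T‖ * ‖ψ‖ ^ 2) : T ψ = ‖T‖ • ψ := by
  have h1 : ⟪T ψ, ‖T‖ • ψ⟫_ℝ = ‖T‖ * ⟪ψ, T ψ⟫_ℝ := by
    rw [inner_smul_right, real_inner_comm]
  have h2 : ‖(‖T‖ • ψ)‖ ^ 2 = ‖T‖ ^ 2 * ‖ψ‖ ^ 2 := by
    rw [norm_smul, Real.norm_eq_abs, abs_of_nonneg (norm_nonneg T)]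
    ring
  have hns : ‖T ψ - ‖T‖ • ψ‖ ^ 2
      = ‖T ψ‖ ^ 2 - 2 * (‖T‖ * ⟪ψ, T ψ⟫_ℝ) + ‖T‖ ^ 2 * ‖ψ‖ ^ 2 := by
    rw [@norm_sub_sq_real, h1, h2]
  have hb : ‖T ψ‖ ≤ ‖T‖ * ‖ψ‖ := T.le_opNorm ψ
  have h0 : ‖T ψ - ‖T‖ • ψ‖ = 0 := by
    nlinarith [norm_nonneg (T ψ - ‖T‖ • ψ), norm_nonneg (T ψ), norm_nonneg ψ,
      norm_nonneg T, sq_nonneg (‖T ψ‖ - ‖T‖ * ‖ψ‖)]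
  rw [← sub_eq_zero]
  exact norm_eq_zero.mp h0

lemma abs_eigen (e : HilbertBasis ℕ ℝ H) (T : H →L[ℝ] H) (hsa : IsSelfAdjoint T)
    (himp : ∀ v : H, (∀ n, 0 ≤ e.repr v n) → v ≠ 0 → ∀ n, 0 < e.repr (T v) n)
    (ψ : H) (hψ : T ψ = ‖T‖ • ψ) :
    T (absVec e ψ) = ‖T‖ • absVec e ψ := by
  set σ := absVec e ψ with hσ
  have hup : ⟪σ, T σ⟫_ℝ ≤ ‖T‖ * ‖σ‖ ^ 2 := by
    calc ⟪σ, T σ⟫_ℝ ≤ ‖σ‖ * ‖T σ‖ := real_inner_le_norm σ (T σ)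
    _ ≤ ‖σ‖ * (‖T‖ * ‖σ‖) := mul_le_mul_of_nonneg_left (T.le_opNorm σ) (norm_nonneg σ)
    _ = ‖T‖ * ‖σ‖ ^ 2 := by ring
  have h1 : ⟪ψ, T ψ⟫_ℝ = ‖T‖ * ‖ψ‖ ^ 2 := by
    rw [hψ, inner_smul_right, real_inner_self_eq_norm_sq]
  have hlow : ‖T‖ * ‖ψ‖ ^ 2 ≤ ⟪σ, T σ⟫_ℝ := by
    rw [← h1, inner_eq_tsum e, inner_eq_tsum e]
    refine Summable.tsum_le_tsum ?_ (summable_mul e ψ (T ψ)) (summable_mul e σ (T σ))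
    intro n
    calc e.repr ψ n * e.repr (T ψ) n ≤ |e.repr ψ n * e.repr (T ψ) n| := le_abs_self _
    _ = |e.repr ψ n| * |e.repr (T ψ) n| := abs_mul _ _
    _ ≤ |e.repr ψ n| * e.repr (T σ) n :=
        mul_le_mul_of_nonneg_left (abs_repr_T_le e T hsa himp ψ n) (abs_nonneg _)
    _ = e.repr σ n * e.repr (T σ) n := by rw [hσ, repr_absVec]
  have hnorm : ‖σ‖ = ‖ψ‖ := norm_absVec e ψ
  refine eigen_of_rayleigh T hsa σ ?_
  rw [hnorm]
  rw [hnorm] at hup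
  linarith

end PFF
end

/-- Perron–Frobenius–Faris theorem: if `T` is a bounded self-adjoint operator which
improves positivity with respect to the cone of vectors with nonnegative coefficients
in an orthonormal basis, and `‖T‖` is an eigenvalue of `T`, then `‖T‖` is a simple
eigenvalue with a strictly positive eigenvector. -/
theorem perron_frobenius_faris {H : Type*} [NormedAddCommGroup H] [InnerProductSpace ℝ H]
    [CompleteSpace H] (e : HilbertBasis ℕ ℝ H) (T : H →L[ℝ] H)
    (hsa : IsSelfAdjoint T)
    (himp : ∀ v : H, (∀ n, 0 ≤ e.repr v n) → v ≠ 0 → ∀ n, 0 < e.repr (T v) n)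
    (hev : ∃ φ : H, φ ≠ 0 ∧ T φ = ‖T‖ • φ) :
    ∃ φ₀ : H, φ₀ ≠ 0 ∧ T φ₀ = ‖T‖ • φ₀ ∧ (∀ n, 0 < e.repr φ₀ n) ∧
      ∀ ψ : H, T ψ = ‖T‖ • ψ → ∃ c : ℝ, ψ = c • φ₀ := by
  classical
  obtain ⟨φ, hφ0, hφe⟩ := hev
  have hTpos : 0 < ‖T‖ := by
    have h0 := himp (e 0) (PFF.repr_e_nonneg e 0) (PFF.e_ne_zero e 0) 0
    by_contra h
    push_neg at h
    have hT0 : T = 0 := norm_le_zero_iff.mp h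
    rw [hT0] at h0
    simp at h0
  have hstrict : ∀ χ : H, T χ = ‖T‖ • χ → χ ≠ 0 → (∀ n, 0 ≤ e.repr χ n) →
      ∀ n, 0 < e.repr χ n := by
    intro χ hχ hne hnn n
    have h := himp χ hnn hne n
    rw [hχ, map_smul] at h
    simp only [lp.coeFn_smul, Pi.smul_apply, smul_eq_mul] at h
    nlinarith
  have hzero : ∀ χ : H, T χ = ‖T‖ • χ → (∃ n, e.repr χ n = 0) → χ = 0 := by
    intro χ hχ hn
    obtain ⟨n, hn⟩ := hn
    by_contra hne
    have habs := PFF.abs_eigen e T hsa himp χ hχ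
    have hane : PFF.absVec e χ ≠ 0 := fun h => hne ((PFF.absVec_eq_zero_iff e χ).mp h)
    have hpos := hstrict _ habs hane
      (fun m => by rw [PFF.repr_absVec]; exact abs_nonneg _) n
    rw [PFF.repr_absVec, hn] at hpos
    simp at hpos
  set φ₀ := PFF.absVec e φ with hφ₀
  have hφ₀ne : φ₀ ≠ 0 := fun h => hφ0 ((PFF.absVec_eq_zero_iff e φ).mp h)
  have hφ₀e : T φ₀ = ‖T‖ • φ₀ := PFF.abs_eigen e T hsa himp φ hφe
  have hφ₀pos : ∀ n, 0 < e.repr φ₀ n :=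
    hstrict φ₀ hφ₀e hφ₀ne (fun m => by rw [hφ₀, PFF.repr_absVec]; exact abs_nonneg _)
  refine ⟨φ₀, hφ₀ne, hφ₀e, hφ₀pos, ?_⟩
  intro ψ hψ
  set c : ℝ := e.repr ψ 0 / e.repr φ₀ 0 with hc
  refine ⟨c, ?_⟩
  have hχe : T (ψ - c • φ₀) = ‖T‖ • (ψ - c • φ₀) := by
    rw [map_sub, map_smul, hψ, hφ₀e, smul_sub, smul_comm]
  have hχ0 : e.repr (ψ - c • φ₀) 0 = 0 := by
    have hden : e.repr φ₀ 0 ≠ 0 := ne_of_gt (hφ₀pos 0)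
    simp only [map_sub, map_smul, lp.coeFn_sub, lp.coeFn_smul, Pi.sub_apply,
      Pi.smul_apply, smul_eq_mul, hc]
    field_simp
    ring
  have := hzero _ hχe ⟨0, hχ0⟩
  rw [sub_eq_zero] at this
  exact this
end
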